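/- Let n ≥ 3 be an integer and γ, δ real numbers, and set α := −1 − δ/(n(n+1)) − γ/((n+1)(n+2)) and β := (n+1)/(n−1) + δ/(n(n−1)) + γ/(n(n+1)). Then the function N(ρ) := ρ^{n+1} − ρⁿ + ρⁿ·P(ρ) + α + βρ satisfies N(1) = 0, N'(1) = 0 and N''(1) = 0; that is, N has a zero of order at least 3 at ρ = 1. -/

import Mathlib

/-- The polynomial P(ρ). -/
noncomputable def P (n : ℕ) (γ δ : ℝ) (ρ : ℝ) : ℝ :=
  -(2 * (n : ℝ) + δ) / ((n : ℝ) * ((n : ℝ) - 1)) + (δ - γ) * ρ / ((n : ℝ) * ((n : ℝ) + 1))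
    + γ * ρ ^ 2 / (((n : ℝ) + 1) * ((n : ℝ) + 2))

/-- The numerator N(ρ) = ρ^{n+1} − ρⁿ + ρⁿP(ρ) + α + βρ of h''. -/
noncomputable def Nfun (n : ℕ) (α β γ δ : ℝ) (ρ : ℝ) : ℝ :=
  ρ ^ (n + 1) - ρ ^ n + ρ ^ n * P n γ δ ρ + α + β * ρ

lemma derivP (a b c d e : ℝ) (n : ℕ) :
    deriv (fun ρ : ℝ => a*ρ^(n+2)+b*ρ^(n+1)+c*ρ^n+d*ρ+e)
      = fun ρ => (a*((n:ℝ)+2))*ρ^(n+1)+(b*((n:ℝ)+1))*ρ^n+(c*(n:ℝ))*ρ^(n-1)+d := by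
  funext ρ
  have h := (((((hasDerivAt_pow (n+2) ρ).const_mul a).add
      ((hasDerivAt_pow (n+1) ρ).const_mul b)).add
      ((hasDerivAt_pow n ρ).const_mul c)).add
      ((hasDerivAt_id' ρ).const_mul d)).add_const e
  simp only [Pi.add_apply] at h
  rw [h.deriv]
  simp only [Nat.add_sub_cancel]
  push_cast
  ring

lemma derivQ (A B C d : ℝ) (n : ℕ) (hn : 3 ≤ n) :
    deriv (fun ρ : ℝ => A*ρ^(n+1)+B*ρ^n+C*ρ^(n-1)+d) 1
      = A*((n:ℝ)+1)+B*(n:ℝ)+C*((n:ℝ)-1) := by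
  have h := ((((hasDerivAt_pow (n+1) (1:ℝ)).const_mul A).add
      ((hasDerivAt_pow n (1:ℝ)).const_mul B)).add
      ((hasDerivAt_pow (n-1) (1:ℝ)).const_mul C)).add_const d
  simp only [Pi.add_apply] at h
  rw [h.deriv, Nat.cast_sub (by omega : 1 ≤ n)]
  simp

/-- First part of Lemma 4.4: for the choice of α, β as in (4.3), (4.4), the numerator of h''
has a zero of order at least 3 at ρ = 1. -/
theorem numerator_triple_zero (n : ℕ) (hn : 3 ≤ n) (γ δ : ℝ)
    (α : ℝ) (hα : α = -1 - δ / ((n : ℝ) * ((n : ℝ) + 1)) - γ / (((n : ℝ) + 1) * ((n : ℝ) + 2)))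
    (β : ℝ) (hβ : β = ((n : ℝ) + 1) / ((n : ℝ) - 1) + δ / ((n : ℝ) * ((n : ℝ) - 1))
      + γ / ((n : ℝ) * ((n : ℝ) + 1))) :
    Nfun n α β γ δ 1 = 0 ∧ deriv (Nfun n α β γ δ) 1 = 0 ∧
      deriv (deriv (Nfun n α β γ δ)) 1 = 0 := by
  have hn3 : (3:ℝ) ≤ (n:ℝ) := by exact_mod_cast hn
  have h0 : (n:ℝ) ≠ 0 := by linarith
  have h1 : (n:ℝ) - 1 ≠ 0 := by linarith
  have hp1 : (n:ℝ) + 1 ≠ 0 := by linarith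
  have hp2 : (n:ℝ) + 2 ≠ 0 := by linarith
  have hq1 : (n:ℝ) * ((n:ℝ) + 1) ≠ 0 := mul_ne_zero h0 hp1
  have hq2 : ((n:ℝ) + 1) * ((n:ℝ) + 2) ≠ 0 := mul_ne_zero hp1 hp2
  have hq3 : (n:ℝ) * ((n:ℝ) - 1) ≠ 0 := mul_ne_zero h0 h1
  have e1 : (n:ℝ)^2 + (n:ℝ) ≠ 0 := by nlinarith
  have e2 : (n:ℝ)^2 - (n:ℝ) ≠ 0 := by nlinarith
  have e3 : (2:ℝ) + (n:ℝ)*3 + (n:ℝ)^2 ≠ 0 := by nlinarith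
  have e4 : (n:ℝ)^2 + (n:ℝ)*3 + 2 ≠ 0 := by nlinarith
  set a := γ/(((n:ℝ)+1)*((n:ℝ)+2)) with ha
  set b := 1+(δ-γ)/((n:ℝ)*((n:ℝ)+1)) with hb
  set c := -(2*(n:ℝ)+δ)/((n:ℝ)*((n:ℝ)-1)) - 1 with hc
  have hfun : Nfun n α β γ δ = fun ρ => a*ρ^(n+2)+b*ρ^(n+1)+c*ρ^n+β*ρ+α := by
    funext ρ
    simp only [Nfun, P, ha, hb, hc]
    ring
  have hd1 : deriv (Nfun n α β γ δ)
      = fun ρ => (a*((n:ℝ)+2))*ρ^(n+1)+(b*((n:ℝ)+1))*ρ^n+(c*(n:ℝ))*ρ^(n-1)+β := by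
    rw [hfun]; exact derivP a b c β α n
  refine ⟨?_, ?_, ?_⟩
  · rw [hfun]
    simp only [one_pow, mul_one]
    rw [hα, hβ, ha, hb, hc]
    field_simp
    ring
  · rw [hd1]
    simp only [one_pow, mul_one]
    rw [hβ, ha, hb, hc]
    field_simp
    ring
  · rw [hd1, derivQ _ _ _ _ n hn]
    rw [ha, hb, hc]
    field_simp
    ring
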